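/- With T the maximal-label functional subgraph of the de Bruijn graph of span n rooted at the maximum vertex m, call u restricted if γ(u) < α(u) and call u a floor vertex if g(u) = ε. Then any directed cycle of T containing exactly ℓ restricted vertices contains exactly ℓ floor vertices. -/
import Mathlib
set_option linter.unusedSectionVars false


section Aux
variable {A : Type*} [LinearOrder A]

private lemma aux_suffix_of_suffix_length_le {l₁ l₂ l : List A}
    (h₁ : l₁ <:+ l) (h₂ : l₂ <:+ l) (h : l₁.length ≤ l₂.length) : l₁ <:+ l₂ := by
  rw [← List.reverse_prefix] at h₁ h₂ ⊢
  exact List.prefix_of_prefix_length_le h₁ h₂ (by simpa using h)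

private lemma aux_lex_of_lt {a b : A} (c r s : List A) (h : a < b) :
    List.Lex (· < ·) (c ++ a :: r) (c ++ b :: s) := by
  induction c with
  | nil => exact List.Lex.rel h
  | cons x c ih => exact List.Lex.cons ih

private lemma aux_le_of_lex {a b : A} (c : List A) {r s : List A}
    (h : List.Lex (· < ·) (c ++ a :: r) (c ++ b :: s)) : a ≤ b := by
  induction c with
  | nil =>
    cases h with
    | cons _ => exact le_rfl
    | rel h => exact le_of_lt h
  | cons x c ih =>
    cases h with
    | cons h => exact ih h
    | rel h => exact absurd h (lt_irrefl x)

private lemma aux_concat_suffix_concat {a b : A} {s t : List A}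
    (h : s ++ [a] <:+ t ++ [b]) : a = b ∧ s <:+ t := by
  rw [← List.reverse_prefix] at h
  simp only [List.reverse_append, List.reverse_cons, List.reverse_nil, List.nil_append,
    List.singleton_append] at h
  rw [List.cons_prefix_cons] at h
  exact ⟨h.1, by rw [← List.reverse_prefix]; exact h.2⟩

end Aux

/-- In the maximal-label functional subgraph `T` of the de Bruijn graph of span `n`
(rooted at the maximal vertex `m`), call a vertex `u` *restricted* if `γ u < α u` and a
*floor* vertex if `g u = ε`. Then any directed cycle of `T` contains exactly as many floor
vertices as restricted vertices. The cycle is given by the periodic sequence `v` of exact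
period `p`, following the maximal-label arcs `γ`. -/
theorem cycle_restricted_eq_floor {A : Type*} [LinearOrder A] (n p : ℕ)
    (L V : Set (List A)) (m : List A) (g : List A → List A) (α γ : List A → A) (v : ℕ → List A)
    (hV : ∀ u ∈ V, u.length = n)
    (harc : ∀ u ∈ V, ∀ b : A, u ++ [b] ∈ L → u.tail ++ [b] ∈ V)
    (hext : ∀ x ∈ V, ∀ s : List A, s <:+ x → ∃ y ∈ V, s <+: y)
    (hm : m ∈ V)
    (hmax : ∀ u ∈ V, u = m ∨ List.Lex (· < ·) u m)
    (hg : ∀ u ∈ V, g u <+: m ∧ g u <:+ u ∧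
      ∀ s : List A, s <+: m → s <:+ u → s.length ≤ (g u).length)
    (hglen : ∀ u ∈ V, u ≠ m → (g u).length < n)
    (hα : ∀ u ∈ V, u ≠ m → g u ++ [α u] <+: m)
    -- v is a cycle of T of length p: each arc is the maximal-label outgoing arc
    (hvV : ∀ i, v i ∈ V ∧ v i ≠ m)
    (hγmax : ∀ i, ∀ b : A, (v i) ++ [b] ∈ L → b ≤ γ (v i))
    (hstep : ∀ i, (v i) ++ [γ (v i)] ∈ L ∧ v (i + 1) = (v i).tail ++ [γ (v i)])
    (hp : 0 < p)
    (hper : ∀ i, v (i + p) = v i)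
    (hinj : ∀ i j, i < p → j < p → v i = v j → i = j) :
    ((Finset.range p).filter fun i => γ (v i) < α (v i)).card =
    ((Finset.range p).filter fun i => g (v i) = []).card := by
  -- basic facts
  have hn : 1 ≤ n := by
    by_contra h
    have hn0 : n = 0 := by omega
    have h1 : (v 0).length = 0 := by rw [hV _ (hvV 0).1, hn0]
    have h2 : m.length = 0 := by rw [hV _ hm, hn0]
    exact (hvV 0).2 (by rw [List.length_eq_zero_iff.mp h1, List.length_eq_zero_iff.mp h2])
  -- the key step facts for each index i
  have key : ∀ i, (γ (v i) < α (v i)) ↔ g (v (i + 1)) = [] := by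
    intro i
    set u := v i with hu_def
    obtain ⟨huV, hune⟩ := hvV i
    obtain ⟨hwV, hwne⟩ := hvV (i + 1)
    have hw : v (i + 1) = u.tail ++ [γ u] := (hstep i).2
    set w := v (i + 1) with hw_def
    have hgu := hg u huV
    have hgw := hg w hwV
    have hgul : (g u).length < n := hglen u huV hune
    have hulen : u.length = n := hV u huV
    have hgut : g u <:+ u.tail :=
      aux_suffix_of_suffix_length_le hgu.2.1 (List.tail_suffix u)
        (by rw [List.length_tail, hulen]; omega)
    have hguw : g u ++ [γ u] <:+ w := by
      obtain ⟨c, hc⟩ := hgut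
      exact ⟨c, by rw [hw, ← hc, List.append_assoc]⟩
    have hαm : g u ++ [α u] <+: m := hα u huV hune
    obtain ⟨r, hr⟩ := hαm  -- (g u ++ [α u]) ++ r = m
    -- (c) : ¬ (α u < γ u)
    have hc : ¬ α u < γ u := by
      intro hlt
      obtain ⟨y, hyV, hy⟩ := hext w hwV (g u ++ [γ u]) hguw
      obtain ⟨r2, hr2⟩ := hy
      have hym : m = g u ++ α u :: r := by rw [← hr]; simp
      have hyy : y = g u ++ γ u :: r2 := by rw [← hr2]; simp
      rcases hmax y hyV with h | h
      · rw [hyy, hym] at h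
        have := List.append_cancel_left h
        simp at this
        exact absurd this.1 (ne_of_gt hlt)
      · rw [hyy, hym] at h
        exact absurd (aux_le_of_lex _ h) (not_le.mpr hlt)
    constructor
    · -- (a) : restricted ⇒ floor successor
      intro hres
      by_contra hne
      -- g w = s ++ [γ u] with s a suffix of u.tail
      rcases List.eq_nil_or_concat (g w) with h | ⟨s, a, hsa⟩
      · exact hne h
      rw [List.concat_eq_append] at hsa
      have hsuf : s ++ [a] <:+ u.tail ++ [γ u] := by rw [← hsa, ← hw]; exact hgw.2.1
      obtain ⟨haγ, hst⟩ := aux_concat_suffix_concat hsuf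
      subst haγ
      have hsu : s <:+ u := hst.trans (List.tail_suffix u)
      have hsm : s <+: m := ((List.prefix_append s [γ u]).trans (hsa ▸ hgw.1))
      have hslen : s.length ≤ (g u).length := hgu.2.2 s hsm hsu
      have hsgu : s <:+ g u := aux_suffix_of_suffix_length_le hsu hgu.2.1 hslen
      obtain ⟨t, ht⟩ := hsgu  -- t ++ s = g u
      -- the suffix s ++ α u :: r of m
      have hσ : s ++ α u :: r <:+ m :=
        ⟨t, by rw [← hr, ← ht]; simp⟩
      obtain ⟨y, hyV, hy⟩ := hext m hm _ hσ
      obtain ⟨r2, hr2⟩ := hy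
      have hyy : y = s ++ α u :: (r ++ r2) := by rw [← hr2]; simp
      obtain ⟨r3, hr3⟩ := hsa ▸ hgw.1  -- (s ++ [γ u]) ++ r3 = m
      have hym : m = s ++ γ u :: r3 := by rw [← hr3]; simp
      rcases hmax y hyV with h | h
      · rw [hyy, hym] at h
        have := List.append_cancel_left h
        simp at this
        exact absurd this.1 (ne_of_gt hres)
      · rw [hyy, hym] at h
        exact absurd (aux_le_of_lex _ h) (not_le.mpr hres)
    · -- (b) : if γ u = α u then g w ≠ []
      intro hfloor
      rcases lt_trichotomy (γ u) (α u) with h | h | h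
      · exact h
      · exfalso
        have : g u ++ [γ u] <+: m := by rw [h]; exact hα u huV hune
        have hlen := hgw.2.2 _ this hguw
        rw [hfloor] at hlen
        simp at hlen
      · exact absurd h hc
  -- v is periodic mod p
  have vmod : ∀ k, v (k % p) = v k := by
    intro k
    induction k using Nat.strong_induction_on with
    | _ k ih =>
      rcases lt_or_ge k p with h | h
      · rw [Nat.mod_eq_of_lt h]
      · have hk : k = (k - p) + p := by omega
        rw [Nat.mod_eq_sub_mod h, ih (k - p) (by omega)]
        conv_rhs => rw [hk, hper]
  -- the bijection i ↦ (i+1) % p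
  apply Finset.card_bij (fun i _ => (i + 1) % p)
  · intro i hi
    simp only [Finset.mem_filter, Finset.mem_range] at hi ⊢
    refine ⟨Nat.mod_lt _ hp, ?_⟩
    rw [vmod (i + 1)]
    exact (key i).mp hi.2
  · intro i hi j hj hij
    simp only [Finset.mem_filter, Finset.mem_range] at hi hj
    have hi1 : i + 1 ≤ p := hi.1
    have hj1 : j + 1 ≤ p := hj.1
    rcases eq_or_lt_of_le hi1 with h | h <;> rcases eq_or_lt_of_le hj1 with h' | h'
    · omega
    · rw [h, Nat.mod_self, Nat.mod_eq_of_lt h'] at hij; omega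
    · rw [h', Nat.mod_self, Nat.mod_eq_of_lt h] at hij; omega
    · rw [Nat.mod_eq_of_lt h, Nat.mod_eq_of_lt h'] at hij; omega
  · intro j hj
    simp only [Finset.mem_filter, Finset.mem_range] at hj
    refine ⟨(j + p - 1) % p, ?_, ?_⟩
    · have hmod : ((j + p - 1) % p + 1) % p = j := by
        have h1 : (j + p - 1) % p + 1 ≡ (j + p - 1) + 1 [MOD p] :=
          (Nat.mod_modEq (j + p - 1) p).add_right 1
        have h2 : (j + p - 1) + 1 = j + p := by omega
        calc ((j + p - 1) % p + 1) % p = ((j + p - 1) + 1) % p := h1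
          _ = (j + p) % p := by rw [h2]
          _ = j := by rw [Nat.add_mod_right, Nat.mod_eq_of_lt hj.1]
      simp only [Finset.mem_filter, Finset.mem_range]
      refine ⟨Nat.mod_lt _ hp, ?_⟩
      rw [key ((j + p - 1) % p), ← vmod ((j + p - 1) % p + 1)]
      -- ((j+p-1)%p + 1) % p = j
      rw [hmod]
      exact hj.2
    · have h1 : (j + p - 1) % p + 1 ≡ (j + p - 1) + 1 [MOD p] :=
        (Nat.mod_modEq (j + p - 1) p).add_right 1
      have h2 : (j + p - 1) + 1 = j + p := by omega
      calc ((j + p - 1) % p + 1) % p = ((j + p - 1) + 1) % p := h1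
        _ = (j + p) % p := by rw [h2]
        _ = j := by rw [Nat.add_mod_right, Nat.mod_eq_of_lt hj.1]
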